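/- Let p, q ∈ (0,1) and n ≥ 1, and consider the n-fold binary asymmetric channel with transition probabilities Pr_{p,q}. Then: (1) p + q < 1 if and only if Pr_{p,q}(x|x) > Pr_{p,q}(x|y) for all x, y ∈ {0,1}^n with y ≠ x; (2) p + q > 1 if and only if Pr_{p,q}(x|x) < Pr_{p,q}(x|y) for all x, y ∈ {0,1}^n with y ≠ x; (3) p + q = 1 if and only if Pr_{p,q}(x|x) = Pr_{p,q}(x|y) for all x, y ∈ {0,1}^n. -/
import Mathlib

open Real Set

/-- The parameter space `T = {(p,q) : 0 ≤ p ≤ q, p + q < 1} \ {(0,0)}`. -/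
def bacT : Set (ℝ × ℝ) := {pq | 0 ≤ pq.1 ∧ pq.1 ≤ pq.2 ∧ pq.1 + pq.2 < 1 ∧ pq ≠ (0, 0)}

/-- The BAC-function `S`. -/
noncomputable def bacS (p q : ℝ) : ℝ :=
  if p = 0 then 0 else (Real.log (1 - p) - Real.log q) / (Real.log (1 - q) - Real.log p)

/-- Transition probability of the n-fold binary asymmetric channel `BAC^n(p,q)`:
`bacPr p q x y = Pr(x|y)`. -/
noncomputable def bacPr (p q : ℝ) {n : ℕ} (x y : Fin n → Bool) : ℝ :=
  ∏ i, if x i then (if y i then 1 - q else p) else (if y i then q else 1 - p)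

/-- The channels `BAC(p,q)` and `BAC(p',q')` are `n`-equivalent. -/
def nEquiv (n : ℕ) (p q p' q' : ℝ) : Prop :=
  ∀ x y z : Fin n → Bool,
    (bacPr p q x y ≤ bacPr p q x z ↔ bacPr p' q' x y ≤ bacPr p' q' x z)

/-- A point `(p,q) ∈ T` is `n`-stable if all nearby points of `T` are `n`-equivalent to it. -/
def nStable (n : ℕ) (pq : ℝ × ℝ) : Prop :=
  ∃ ε > 0, ∀ pq' ∈ bacT, ‖pq' - pq‖ < ε → nEquiv n pq.1 pq.2 pq'.1 pq'.2

theorem stmt15 (p q : ℝ) (hp : p ∈ Set.Ioo (0 : ℝ) 1) (hq : q ∈ Set.Ioo (0 : ℝ) 1)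
    (n : ℕ) (hn : 1 ≤ n) :
    (p + q < 1 ↔ ∀ x y : Fin n → Bool, y ≠ x → bacPr p q x y < bacPr p q x x) ∧
    (p + q > 1 ↔ ∀ x y : Fin n → Bool, y ≠ x → bacPr p q x x < bacPr p q x y) ∧
    (p + q = 1 ↔ ∀ x y : Fin n → Bool, bacPr p q x x = bacPr p q x y) := by
  obtain ⟨hp0, hp1⟩ := hp
  obtain ⟨hq0, hq1⟩ := hq
  have key_lt : p + q < 1 → ∀ x y : Fin n → Bool, y ≠ x →
      bacPr p q x y < bacPr p q x x := by
    intro h x y hxy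
    obtain ⟨i, hi⟩ := Function.ne_iff.mp hxy
    unfold bacPr
    apply Finset.prod_lt_prod
    · intro j _
      cases hx : x j <;> cases hy : y j <;> simp <;> linarith
    · intro j _
      cases hx : x j <;> cases hy : y j <;> simp <;> linarith
    · refine ⟨i, Finset.mem_univ i, ?_⟩
      cases hx : x i <;> cases hy : y i <;> simp_all <;> linarith
  have key_gt : 1 < p + q → ∀ x y : Fin n → Bool, y ≠ x →
      bacPr p q x x < bacPr p q x y := by
    intro h x y hxy
    obtain ⟨i, hi⟩ := Function.ne_iff.mp hxy
    unfold bacPr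
    apply Finset.prod_lt_prod
    · intro j _
      cases hx : x j <;> simp <;> linarith
    · intro j _
      cases hx : x j <;> cases hy : y j <;> simp <;> linarith
    · refine ⟨i, Finset.mem_univ i, ?_⟩
      cases hx : x i <;> cases hy : y i <;> simp_all <;> linarith
  have key_eq : p + q = 1 → ∀ x y : Fin n → Bool,
      bacPr p q x x = bacPr p q x y := by
    intro h x y
    unfold bacPr
    apply Finset.prod_congr rfl
    intro j _
    cases hx : x j <;> cases hy : y j <;> simp <;> linarith
  -- a pair of distinct words
  have hne : (fun _ : Fin n => true) ≠ (fun _ : Fin n => false) := by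
    intro h
    have := congrFun h ⟨0, hn⟩
    simp at this
  refine ⟨⟨fun h => key_lt h, fun h => ?_⟩, ⟨fun h => key_gt h, fun h => ?_⟩,
      ⟨fun h => key_eq h, fun h => ?_⟩⟩
  · rcases lt_trichotomy (p + q) 1 with h1 | h1 | h1
    · exact h1
    · exact absurd (key_eq h1 _ _ ) (ne_of_gt (h _ _ hne))
    · exact absurd (key_gt h1 _ _ hne) (lt_asymm (h _ _ hne))
  · rcases lt_trichotomy (p + q) 1 with h1 | h1 | h1
    · exact absurd (key_lt h1 _ _ hne) (lt_asymm (h _ _ hne))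
    · exact absurd (key_eq h1 _ _) (ne_of_lt (h _ _ hne))
    · exact h1
  · rcases lt_trichotomy (p + q) 1 with h1 | h1 | h1
    · exact absurd (h _ _) (ne_of_gt (key_lt h1 _ _ hne))
    · exact h1
    · exact absurd (h _ _) (ne_of_lt (key_gt h1 _ _ hne))
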